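/- Discrete Picone inequality: let 1 < r₂ ≤ r₁ < ∞ and let f, g be real-valued with f(x), f(y) > 0 and g(x), g(y) ≥ 0. Then |f(x)-f(y)|^{r₁-2}(f(x)-f(y)) · (g(x)^{r₂}/f(x)^{r₂-1} - g(y)^{r₂}/f(y)^{r₂-1}) ≤ |g(x)-g(y)|^{r₂} |f(x)-f(y)|^{r₁-r₂}. -/

import Mathlib

/-- `x^(p-1) * x = x^p` for nonneg `x` and `p ≠ 0`. -/
lemma aux_rpow_sub_one_mul (x p : ℝ) (hx : 0 ≤ x) (hp : p ≠ 0) :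
    x ^ (p - 1) * x = x ^ p := by
  rcases eq_or_lt_of_le hx with h | h
  · simp [← h, Real.zero_rpow hp]
  · have := Real.rpow_add_one h.ne' (p - 1)
    rw [show p - 1 + 1 = p by ring] at this
    exact this.symm

/-- Young's inequality in the form `p * (x^(p-1) * y) ≤ (p-1) * x^p + y^p`. -/
lemma aux_young (p x y : ℝ) (hp : 1 < p) (hx : 0 ≤ x) (hy : 0 ≤ y) :
    p * (x ^ (p - 1) * y) ≤ (p - 1) * x ^ p + y ^ p := by
  have hp0 : (0 : ℝ) < p := lt_trans one_pos hp
  have h := Real.geom_mean_le_arith_mean2_weighted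
    (w₁ := (p - 1) / p) (w₂ := 1 / p) (p₁ := x ^ p) (p₂ := y ^ p)
    (div_nonneg (by linarith) hp0.le) (by positivity) (Real.rpow_nonneg hx p) (Real.rpow_nonneg hy p)
    (by field_simp; ring)
  have e1 : (x ^ p) ^ ((p - 1) / p) = x ^ (p - 1) := by
    rw [← Real.rpow_mul hx]
    congr 1
    rw [mul_comm]
    exact div_mul_cancel₀ _ hp0.ne'
  have e2 : (y ^ p) ^ (1 / p) = y := by
    rw [← Real.rpow_mul hy]
    rw [show p * (1 / p) = 1 by field_simp, Real.rpow_one]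
  rw [e1, e2] at h
  have := mul_le_mul_of_nonneg_left h hp0.le
  calc p * (x ^ (p - 1) * y) = p * ((p - 1) / p * x ^ p + 1 / p * y ^ p)
        - (p * ((p-1)/p * x ^ p + 1/p * y ^ p) - p * (x ^ (p-1) * y)) := by ring
    _ ≤ p * ((p - 1) / p * x ^ p + 1 / p * y ^ p) := by linarith
    _ = (p - 1) * x ^ p + y ^ p := by field_simp

/-- Key case of the discrete Picone inequality, assuming `b ≤ a`. -/
lemma aux_picone_le (p a b c d : ℝ) (hp : 1 < p) (hab : b ≤ a)
    (ha : 0 < a) (hb : 0 < b) (hc : 0 ≤ c) (hd : 0 ≤ d) :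
    |a - b| ^ (p - 2) * (a - b) * (c ^ p / a ^ (p - 1) - d ^ p / b ^ (p - 1))
      ≤ |c - d| ^ p := by
  have hp0 : (0 : ℝ) < p := lt_trans one_pos hp
  rcases eq_or_lt_of_le hab with h | h
  · rw [← h]
    simp [Real.rpow_nonneg (abs_nonneg (c - d)) p]
  · -- b < a
    set s : ℝ := a - b with hs_def
    have hs : 0 < s := sub_pos.mpr h
    have habs : |s| = s := abs_of_pos hs
    set u : ℝ := c / a with hu_def
    set v : ℝ := d / b with hv_def
    have hu : 0 ≤ u := div_nonneg hc ha.le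
    have hv : 0 ≤ v := div_nonneg hd hb.le
    have hca : u * a = c := by rw [hu_def]; exact div_mul_cancel₀ c ha.ne'
    have hdb : v * b = d := by rw [hv_def]; exact div_mul_cancel₀ d hb.ne'
    have hap : a ^ (p - 1) * a = a ^ p := aux_rpow_sub_one_mul a p ha.le hp0.ne'
    have hbp : b ^ (p - 1) * b = b ^ p := aux_rpow_sub_one_mul b p hb.le hp0.ne'
    have hup : u ^ (p - 1) * u = u ^ p := aux_rpow_sub_one_mul u p hu hp0.ne'
    have hsp : s ^ (p - 1) * s = s ^ p := aux_rpow_sub_one_mul s p hs.le hp0.ne'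
    have ha1 : a ^ (p - 1) ≠ 0 := (Real.rpow_pos_of_pos ha _).ne'
    have hb1 : b ^ (p - 1) ≠ 0 := (Real.rpow_pos_of_pos hb _).ne'
    have e1 : c ^ p / a ^ (p - 1) = u ^ p * a := by
      rw [hu_def, Real.div_rpow hc ha.le, ← hap]
      field_simp
    have e2 : d ^ p / b ^ (p - 1) = v ^ p * b := by
      rw [hv_def, Real.div_rpow hd hb.le, ← hbp]
      field_simp
    -- Step A : convexity (via Young)
    have hy : p * (u ^ (p - 1) * v) * b ≤ ((p - 1) * u ^ p + v ^ p) * b :=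
      mul_le_mul_of_nonneg_right (aux_young p u v hp hu hv) hb.le
    have stepA : u ^ p * a - v ^ p * b
        ≤ p * (u ^ (p - 1) * (c - d)) - (p - 1) * (u ^ p * s) := by
      have key : p * (u ^ (p - 1) * (c - d)) - (p - 1) * (u ^ p * s)
          - (u ^ p * a - v ^ p * b)
          = ((p - 1) * u ^ p + v ^ p) * b - p * (u ^ (p - 1) * v) * b := by
        rw [← hca, ← hdb, ← hup, hs_def]
        ring
      linarith [key, hy]
    -- set t
    set t : ℝ := u * s with ht_def
    have ht : 0 ≤ t := mul_nonneg hu hs.le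
    have hts : t ^ p = u ^ p * s ^ p := Real.mul_rpow hu hs.le
    have ht1 : t ^ (p - 1) = u ^ (p - 1) * s ^ (p - 1) := Real.mul_rpow hu hs.le
    -- Step B
    have stepB : p * (t ^ (p - 1) * (c - d)) - (p - 1) * t ^ p ≤ |c - d| ^ p := by
      rcases le_total d c with hdc | hcd
      · have habs2 : |c - d| = c - d := abs_of_nonneg (by linarith)
        have := aux_young p t (c - d) hp ht (by linarith)
        have htp : 0 ≤ t ^ p := Real.rpow_nonneg ht p
        rw [habs2]
        linarith
      · have h1 : t ^ (p - 1) * (c - d) ≤ 0 :=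
          mul_nonpos_of_nonneg_of_nonpos (Real.rpow_nonneg ht _) (by linarith)
        have h2 : 0 ≤ t ^ p := Real.rpow_nonneg ht p
        have h3 : 0 ≤ |c - d| ^ p := Real.rpow_nonneg (abs_nonneg _) p
        nlinarith
    have hsn : 0 ≤ s ^ (p - 1) := Real.rpow_nonneg hs.le _
    calc |s| ^ (p - 2) * s * (c ^ p / a ^ (p - 1) - d ^ p / b ^ (p - 1))
        = s ^ (p - 1) * (u ^ p * a - v ^ p * b) := by
          rw [habs, e1, e2,
            show p - 1 = (p - 2) + 1 by ring, Real.rpow_add_one hs.ne']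
          try ring
      _ ≤ s ^ (p - 1) * (p * (u ^ (p - 1) * (c - d)) - (p - 1) * (u ^ p * s)) :=
          mul_le_mul_of_nonneg_left stepA hsn
      _ = p * (t ^ (p - 1) * (c - d)) - (p - 1) * t ^ p := by
          rw [ht1, hts, ← hsp, ← hup]
          try ring
      _ ≤ |c - d| ^ p := stepB

/-- Discrete Picone inequality with equal exponents. -/
lemma aux_picone (p a b c d : ℝ) (hp : 1 < p)
    (ha : 0 < a) (hb : 0 < b) (hc : 0 ≤ c) (hd : 0 ≤ d) :
    |a - b| ^ (p - 2) * (a - b) * (c ^ p / a ^ (p - 1) - d ^ p / b ^ (p - 1))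
      ≤ |c - d| ^ p := by
  rcases le_total b a with h | h
  · exact aux_picone_le p a b c d hp h ha hb hc hd
  · have H := aux_picone_le p b a d c hp h hb ha hd hc
    rw [abs_sub_comm b a, abs_sub_comm d c] at H
    have e : |a - b| ^ (p - 2) * (a - b) * (c ^ p / a ^ (p - 1) - d ^ p / b ^ (p - 1))
        = |a - b| ^ (p - 2) * (b - a) * (d ^ p / b ^ (p - 1) - c ^ p / a ^ (p - 1)) :=
      by ring
    rw [e]
    exact H

/-- Discrete Picone inequality (Lemma 2.3(i)): for `1 < r₂ ≤ r₁`, `a = f(x) > 0`,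
`b = f(y) > 0`, `c = g(x) ≥ 0`, `d = g(y) ≥ 0`,
`|a-b|^(r₁-2)(a-b)(c^{r₂}/a^{r₂-1} - d^{r₂}/b^{r₂-1}) ≤ |c-d|^{r₂} |a-b|^{r₁-r₂}`. -/
theorem discrete_picone_one (r₁ r₂ a b c d : ℝ) (hr₂ : 1 < r₂) (hr : r₂ ≤ r₁)
    (ha : 0 < a) (hb : 0 < b) (hc : 0 ≤ c) (hd : 0 ≤ d) :
    |a - b| ^ (r₁ - 2) * (a - b) *
        (c ^ r₂ / a ^ (r₂ - 1) - d ^ r₂ / b ^ (r₂ - 1)) ≤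
      |c - d| ^ r₂ * |a - b| ^ (r₁ - r₂) := by
  by_cases hab : a = b
  · rw [hab]
    simp only [sub_self, mul_zero, zero_mul]
    positivity
  · have habs : 0 < |a - b| := abs_pos.mpr (sub_ne_zero.mpr hab)
    have hsplit : |a - b| ^ (r₁ - 2) = |a - b| ^ (r₁ - r₂) * |a - b| ^ (r₂ - 2) := by
      rw [← Real.rpow_add habs]
      congr 1
      ring
    have key := aux_picone r₂ a b c d hr₂ ha hb hc hd
    calc |a - b| ^ (r₁ - 2) * (a - b) *
          (c ^ r₂ / a ^ (r₂ - 1) - d ^ r₂ / b ^ (r₂ - 1))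
        = |a - b| ^ (r₁ - r₂) *
            (|a - b| ^ (r₂ - 2) * (a - b) *
              (c ^ r₂ / a ^ (r₂ - 1) - d ^ r₂ / b ^ (r₂ - 1))) := by
          rw [hsplit]; ring
      _ ≤ |a - b| ^ (r₁ - r₂) * |c - d| ^ r₂ :=
          mul_le_mul_of_nonneg_left key (Real.rpow_nonneg (abs_nonneg _) _)
      _ = |c - d| ^ r₂ * |a - b| ^ (r₁ - r₂) := mul_comm _ _
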